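/- Let char F ≠ 3 and let K = F[X]/(X²+X+1) be the quadratic étale algebra generated by an element w with w² + w + 1 = 0. Then the para-quadratic algebra (K, •, n), where x•y = x̄·ȳ, has exactly three idempotents: 1, w, and w², and its automorphism group is the symmetric group S₃, acting by permuting these three idempotents. -/

import Mathlib

section ParaQuadAux

variable {F K : Type*} [Field F] [CommRing K] [Algebra F K]

private lemma pq_mulE (w : K) (hw : w ^ 2 + w + 1 = 0) (a c a' c' : F) :
    (a • (1:K) + c • w) * (a' • (1:K) + c' • w)
      = (a * a' - c * c') • (1:K) + (a * c' + c * a' - c * c') • w := by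
  simp only [Algebra.smul_def, map_sub, map_add, map_mul, mul_one]
  linear_combination (algebraMap F K c * algebraMap F K c') * hw

private def pq_mulLEquiv (u : K) (hu : u * (u * u) = 1) : K ≃ₗ[F] K where
  toFun x := u * x
  map_add' x y := by ring
  map_smul' r x := by simp [mul_smul_comm]
  invFun x := u * u * x
  left_inv x := by
    show u * u * (u * x) = x
    rw [show u * u * (u * x) = u * (u * u) * x by ring, hu, one_mul]
  right_inv x := by
    show u * (u * u * x) = x
    rw [show u * (u * u * x) = u * (u * u) * x by ring, hu, one_mul]

end ParaQuadAux

/-- For `char F ≠ 3` and `K = F[X]/(X²+X+1) = F·1 ⊕ F·w`, the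
para-quadratic algebra `x•y = x̄·ȳ` has exactly three idempotents `1, w, w²`,
and its automorphism group is the symmetric group `S₃` permuting these three
idempotents. -/
theorem paraquadratic_idempotents_and_S3
    {F K : Type*} [Field F] [CommRing K] [Algebra F K]
    (hchar : (3 : F) ≠ 0)
    (w : K) (hw : w ^ 2 + w + 1 = 0)
    (b : Module.Basis (Fin 2) F K) (hb0 : b 0 = 1) (hb1 : b 1 = w)
    (bar : K → K) (hbar : ∀ x, bar x = (Algebra.trace F K x) • (1 : K) - x)
    (bullet : K → K → K) (hbullet : ∀ x y, bullet x y = bar x * bar y) :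
    {x : K | x ≠ 0 ∧ bullet x x = x} = {1, w, w * w} ∧
    ({1, w, w * w} : Set K).ncard = 3 ∧
    ∃ G : Subgroup (K ≃ₗ[F] K),
      (G : Set (K ≃ₗ[F] K)) =
        {f : K ≃ₗ[F] K | ∀ x y : K, f (bullet x y) = bullet (f x) (f y)} ∧
      ∃ Φ : G ≃* Equiv.Perm ({1, w, w * w} : Set K),
        ∀ (f : G) (x : ({1, w, w * w} : Set K)),
          ((Φ f) x : K) = (f : K ≃ₗ[F] K) (x : K) := by
  classical
  have h1E : (1:K) = (1:F) • (1:K) + (0:F) • w := by simp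
  have hwE : w = (0:F) • (1:K) + (1:F) • w := by simp
  have hmulE := pq_mulE (F := F) w hw
  have hEx : ∀ x : K, x = (b.repr x 0) • (1:K) + (b.repr x 1) • w := by
    intro x
    have h := b.sum_repr x
    rw [Fin.sum_univ_two, hb0, hb1] at h
    exact h.symm
  have hreprE : ∀ a c : F,
      b.repr (a • (1:K) + c • w) 0 = a ∧ b.repr (a • (1:K) + c • w) 1 = c := by
    intro a c; rw [← hb0, ← hb1]; simp [Finsupp.single_apply]
  have hcoord : ∀ a c a' c' : F,
      a • (1:K) + c • w = a' • (1:K) + c' • w → a = a' ∧ c = c' := by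
    intro a c a' c' h
    exact ⟨by rw [← (hreprE a c).1, h, (hreprE a' c').1],
      by rw [← (hreprE a c).2, h, (hreprE a' c').2]⟩
  have hw2E : w * w = (-1:F) • (1:K) + (-1:F) • w := by
    simp only [Algebra.smul_def, map_neg, map_one, mul_one]
    linear_combination hw
  have htrE : ∀ a c : F, Algebra.trace F K (a • (1:K) + c • w) = 2*a - c := by
    intro a c
    have hx1 : (a • (1:K) + c • w) * w = (-c) • (1:K) + (a - c) • w := by
      calc (a • (1:K) + c • w) * w
          = (a • (1:K) + c • w) * ((0:F) • (1:K) + (1:F) • w) := by rw [← hwE]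
        _ = (-c) • (1:K) + (a - c) • w := by rw [hmulE]; match_scalars <;> ring
    rw [Algebra.trace_eq_matrix_trace b, Matrix.trace_fin_two,
      Algebra.leftMulMatrix_eq_repr_mul, Algebra.leftMulMatrix_eq_repr_mul, hb0, hb1,
      mul_one, hx1, (hreprE a c).1, (hreprE (-c) (a-c)).2]
    ring
  have hbarE : ∀ a c : F, bar (a • (1:K) + c • w) = (a - c) • (1:K) + (-c) • w := by
    intro a c
    rw [hbar, htrE]
    module
  have hne10 : (1:K) ≠ 0 := by rw [← hb0]; exact b.ne_zero 0
  have hnew0 : w ≠ 0 := by rw [← hb1]; exact b.ne_zero 1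
  have hneww0 : w * w ≠ 0 := by
    intro h
    have h0 : w * w = (0:F) • (1:K) + (0:F) • w := by rw [h]; simp
    have h1 := (hcoord _ _ _ _ (hw2E.symm.trans h0)).1
    exact one_ne_zero (neg_eq_zero.mp (h1.trans rfl) : (1:F) = 0)
  have hbar1 : bar (1:K) = 1 := by
    calc bar (1:K) = bar ((1:F) • (1:K) + (0:F) • w) := by rw [← h1E]
      _ = ((1:F) - 0) • (1:K) + (-(0:F)) • w := hbarE 1 0
      _ = 1 := by simp
  have hbarw : bar w = w * w := by
    calc bar w = bar ((0:F) • (1:K) + (1:F) • w) := by rw [← hwE]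
      _ = ((0:F) - 1) • (1:K) + (-(1:F)) • w := hbarE 0 1
      _ = w * w := by rw [hw2E]; match_scalars <;> ring
  have hbarww : bar (w * w) = w := by
    calc bar (w * w) = bar ((-1:F) • (1:K) + (-1:F) • w) := by rw [hw2E]
      _ = ((-1:F) - (-1)) • (1:K) + (-(-1:F)) • w := hbarE (-1) (-1)
      _ = w := by simp
  have hidem : {x : K | x ≠ 0 ∧ bullet x x = x} = {1, w, w * w} := by
    ext z
    simp only [Set.mem_setOf_eq, Set.mem_insert_iff, Set.mem_singleton_iff]
    constructor
    · rintro ⟨hx0, hxx⟩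
      obtain ⟨a, c, rfl⟩ : ∃ a c : F, z = a • (1:K) + c • w := ⟨_, _, hEx z⟩
      rw [hbullet, hbarE, hmulE] at hxx
      obtain ⟨e1, e2⟩ := hcoord _ _ _ _ hxx
      have h1 : a*a - 2*(a*c) = a := by linear_combination e1
      have h2 : c*c - 2*(a*c) = c := by linear_combination e2
      have hd : (a - c) * (a + c - 1) = 0 := by linear_combination h1 - h2
      rcases mul_eq_zero.mp hd with hac | hac
      · have hca : c = a := by linear_combination -hac
        subst hca
        have ha : c * (c + 1) = 0 := by linear_combination -h1
        rcases mul_eq_zero.mp ha with ha0 | ha1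
        · exact absurd (by rw [ha0]; simp) hx0
        · have ha' : c = -1 := by linear_combination ha1
          right; right
          rw [ha']
          exact hw2E.symm
      · have h3 : (3:F) * (a * (a - 1)) = 0 := by linear_combination h1 + (2*a) * hac
        have ha := (mul_eq_zero.mp h3).resolve_left hchar
        rcases mul_eq_zero.mp ha with ha0 | ha1
        · have hc : c = 1 := by linear_combination hac - ha0
          right; left
          rw [ha0, hc]
          exact hwE.symm
        · have ha' : a = 1 := by linear_combination ha1
          have hc : c = 0 := by linear_combination hac - ha1
          left
          rw [ha', hc]
          exact h1E.symm
    · rintro (h | h | h)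
      · rw [h]; exact ⟨hne10, by rw [hbullet, hbar1, one_mul]⟩
      · rw [h]
        refine ⟨hnew0, ?_⟩
        rw [hbullet, hbarw]
        linear_combination (w^2 - w) * hw
      · rw [h]; exact ⟨hneww0, by rw [hbullet, hbarww]⟩
  have hne1w : (1:K) ≠ w := by
    intro h
    have h1 := (hcoord 1 0 0 1 (by rw [← h1E, ← hwE]; exact h)).1
    exact one_ne_zero h1
  have hne1ww : (1:K) ≠ w * w := by
    intro h
    have h1 := (hcoord 1 0 (-1) (-1) (by rw [← h1E, ← hw2E]; exact h)).2
    exact one_ne_zero (by linear_combination h1 : (1:F) = 0)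
  have hnewww : w ≠ w * w := by
    intro h
    have h1 := (hcoord 0 1 (-1) (-1) (by rw [← hwE, ← hw2E]; exact h)).1
    exact one_ne_zero (by linear_combination h1 : (1:F) = 0)
  have p1 : (1:K) ∈ ({1, w, w*w} : Set K) := Set.mem_insert _ _
  have pw : w ∈ ({1, w, w*w} : Set K) :=
    Set.mem_insert_of_mem _ (Set.mem_insert _ _)
  have pww : (w*w) ∈ ({1, w, w*w} : Set K) :=
    Set.mem_insert_of_mem _ (Set.mem_insert_of_mem _ rfl)
  have d1 : (⟨1, p1⟩ : ({1, w, w*w} : Set K)) ≠ ⟨w, pw⟩ :=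
    fun h => hne1w (congrArg Subtype.val h)
  have d2 : (⟨1, p1⟩ : ({1, w, w*w} : Set K)) ≠ ⟨w*w, pww⟩ :=
    fun h => hne1ww (congrArg Subtype.val h)
  have d3 : (⟨w, pw⟩ : ({1, w, w*w} : Set K)) ≠ ⟨w*w, pww⟩ :=
    fun h => hnewww (congrArg Subtype.val h)
  have tri : ∀ z : ({1, w, w*w} : Set K),
      z = ⟨1, p1⟩ ∨ z = ⟨w, pw⟩ ∨ z = ⟨w*w, pww⟩ := by
    intro z
    have hz : (z : K) = 1 ∨ (z : K) = w ∨ (z : K) = w*w := z.2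
    rcases hz with h | h | h
    · exact Or.inl (Subtype.ext h)
    · exact Or.inr (Or.inl (Subtype.ext h))
    · exact Or.inr (Or.inr (Subtype.ext h))
  have key : ∀ x y z z' : ({1, w, w*w} : Set K),
      x ≠ y → z ≠ x → z ≠ y → z' ≠ x → z' ≠ y → z = z' := by
    intro x y z z' hxy hzx hzy hz'x hz'y
    rcases tri x with rfl | rfl | rfl <;> rcases tri y with rfl | rfl | rfl <;>
      rcases tri z with rfl | rfl | rfl <;> rcases tri z' with rfl | rfl | rfl <;>
      first
        | rfl
        | exact absurd rfl hxy
        | exact absurd rfl hzx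
        | exact absurd rfl hzy
        | exact absurd rfl hz'x
        | exact absurd rfl hz'y
  have hdet : ∀ σ τ : Equiv.Perm ({1, w, w*w} : Set K),
      σ ⟨1, p1⟩ = τ ⟨1, p1⟩ → σ ⟨w, pw⟩ = τ ⟨w, pw⟩ → σ = τ := by
    intro σ τ h1 h2
    apply Equiv.ext
    intro z
    rcases tri z with rfl | rfl | rfl
    · exact h1
    · exact h2
    · refine key (σ ⟨1, p1⟩) (σ ⟨w, pw⟩) (σ ⟨w*w, pww⟩) (τ ⟨w*w, pww⟩)
        (σ.injective.ne d1) (σ.injective.ne d2.symm) (σ.injective.ne d3.symm)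
        ?_ ?_
      · rw [h1]; exact τ.injective.ne d2.symm
      · rw [h2]; exact τ.injective.ne d3.symm
  refine ⟨hidem, ?_, ?_⟩
  · rw [Set.ncard_eq_three]
    exact ⟨1, w, w*w, hne1w, hne1ww, hnewww, rfl⟩
  · -- the automorphism group
    have hbar_mul : ∀ x y : K, bar (x * y) = bar x * bar y := by
      intro x y
      obtain ⟨a, c, rfl⟩ : ∃ a c : F, x = a • (1:K) + c • w := ⟨_, _, hEx x⟩
      obtain ⟨a', c', rfl⟩ : ∃ a' c' : F, y = a' • (1:K) + c' • w := ⟨_, _, hEx y⟩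
      rw [hmulE, hbarE, hbarE, hbarE, hmulE]
      match_scalars <;> ring
    have hbar_bar : ∀ x : K, bar (bar x) = x := by
      intro x
      obtain ⟨a, c, rfl⟩ : ∃ a c : F, x = a • (1:K) + c • w := ⟨_, _, hEx x⟩
      rw [hbarE, hbarE]
      match_scalars <;> ring
    have hbar_add : ∀ x y : K, bar (x + y) = bar x + bar y := by
      intro x y; rw [hbar, hbar, hbar, map_add]; module
    have hbar_smul : ∀ (r : F) (x : K), bar (r • x) = r • bar x := by
      intro r x
      simp only [hbar, map_smul, smul_sub, smul_smul, smul_eq_mul]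
    let B : K ≃ₗ[F] K :=
      { toFun := bar, map_add' := hbar_add,
        map_smul' := fun r x => by simpa using hbar_smul r x,
        invFun := bar, left_inv := hbar_bar, right_inv := hbar_bar }
    have hw3 : w * (w * w) = 1 := by linear_combination (w - 1) * hw
    have hw3' : (w * w) * ((w * w) * (w * w)) = 1 := by
      linear_combination (w^4 - w^3 + w - 1) * hw
    let Mw : K ≃ₗ[F] K := pq_mulLEquiv w hw3
    let Mww : K ≃ₗ[F] K := pq_mulLEquiv (w*w) hw3'
    let G : Subgroup (K ≃ₗ[F] K) :=
      { carrier := {f : K ≃ₗ[F] K | ∀ x y : K, f (bullet x y) = bullet (f x) (f y)}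
        one_mem' := fun x y => rfl
        mul_mem' := by
          intro f g hf hg x y
          show f (g (bullet x y)) = bullet (f (g x)) (f (g y))
          rw [hg, hf]
        inv_mem' := by
          intro f hf x y
          have hf' : ∀ x y : K, f (bullet x y) = bullet (f x) (f y) := hf
          show f.symm (bullet x y) = bullet (f.symm x) (f.symm y)
          apply f.injective
          simp only [hf', LinearEquiv.apply_symm_apply] }
    refine ⟨G, rfl, ?_⟩
    have hBG : B ∈ G := by
      show ∀ x y : K, B (bullet x y) = bullet (B x) (B y)
      intro x y
      rw [hbullet, hbullet]
      show bar (bar x * bar y) = bar (bar x) * bar (bar y)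
      exact hbar_mul _ _
    have hMwG : Mw ∈ G := by
      show ∀ x y : K, Mw (bullet x y) = bullet (Mw x) (Mw y)
      intro x y
      rw [hbullet, hbullet]
      show w * (bar x * bar y) = bar (w * x) * bar (w * y)
      rw [hbar_mul w x, hbar_mul w y, hbarw]
      linear_combination (-(bar x * bar y * w) * (w - 1)) * hw
    have hMwwG : Mww ∈ G := by
      show ∀ x y : K, Mww (bullet x y) = bullet (Mww x) (Mww y)
      intro x y
      rw [hbullet, hbullet]
      show (w*w) * (bar x * bar y) = bar ((w*w) * x) * bar ((w*w) * y)
      rw [hbar_mul (w*w) x, hbar_mul (w*w) y, hbarww]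
      ring
    have hstab : ∀ f : G, ∀ x : K,
        x ∈ ({1, w, w*w} : Set K) ↔ (f : K ≃ₗ[F] K) x ∈ ({1, w, w*w} : Set K) := by
      have fwd : ∀ f : G, ∀ x : K, x ∈ ({1, w, w*w} : Set K) →
          (f : K ≃ₗ[F] K) x ∈ ({1, w, w*w} : Set K) := by
        intro f x hx
        have hfG : ∀ x y : K, (f : K ≃ₗ[F] K) (bullet x y)
            = bullet ((f : K ≃ₗ[F] K) x) ((f : K ≃ₗ[F] K) y) := f.2
        rw [← hidem] at hx ⊢
        obtain ⟨hx0, hxx⟩ := hx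
        refine ⟨fun h => hx0 ((f : K ≃ₗ[F] K).map_eq_zero_iff.mp h), ?_⟩
        rw [← hfG x x, hxx]
      intro f x
      refine ⟨fwd f x, fun h => ?_⟩
      have h2 := fwd f⁻¹ _ h
      have h3 : ((f⁻¹ : G) : K ≃ₗ[F] K) ((f : K ≃ₗ[F] K) x) = x :=
        (f : K ≃ₗ[F] K).symm_apply_apply x
      rwa [h3] at h2
    let M : G →* Equiv.Perm ({1, w, w*w} : Set K) :=
      { toFun := fun f => Equiv.Perm.subtypePerm (f : K ≃ₗ[F] K).toEquiv (fun x => (hstab f x).symm),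
        map_one' := by ext z; rfl,
        map_mul' := fun f g => by ext z; rfl }
    have hMinj : Function.Injective M := by
      intro f g hfg
      have e1' := congrArg Subtype.val
        (DFunLike.congr_fun hfg (⟨1, p1⟩ : ({1, w, w*w} : Set K)))
      have ew' := congrArg Subtype.val
        (DFunLike.congr_fun hfg (⟨w, pw⟩ : ({1, w, w*w} : Set K)))
      have e1 : (f : K ≃ₗ[F] K) 1 = (g : K ≃ₗ[F] K) 1 := e1'
      have ew : (f : K ≃ₗ[F] K) w = (g : K ≃ₗ[F] K) w := ew'
      apply Subtype.ext
      apply LinearEquiv.toLinearMap_injective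
      refine b.ext fun i => ?_
      fin_cases i
      · simpa [hb0] using e1
      · simpa [hb1] using ew
    have hMsurj : Function.Surjective M := by
      intro σ
      have huv : σ ⟨1, p1⟩ ≠ σ ⟨w, pw⟩ := σ.injective.ne d1
      have hfin : ∀ f : G, ((f : K ≃ₗ[F] K) 1 = ((σ ⟨1, p1⟩ : ({1,w,w*w}:Set K)) : K)) →
          ((f : K ≃ₗ[F] K) w = ((σ ⟨w, pw⟩ : ({1,w,w*w}:Set K)) : K)) → M f = σ := by
        intro f h1 h2
        exact hdet (M f) σ (Subtype.ext h1) (Subtype.ext h2)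
      rcases tri (σ ⟨1, p1⟩) with hu | hu | hu <;>
        rcases tri (σ ⟨w, pw⟩) with hv | hv | hv
      · exact absurd (hu.trans hv.symm) huv
      · exact ⟨1, hfin 1 (by rw [hu]; rfl) (by rw [hv]; rfl)⟩
      · refine ⟨⟨B, hBG⟩, hfin _ (by rw [hu]; exact hbar1) (by rw [hv]; exact hbarw)⟩
      · refine ⟨⟨Mw, hMwG⟩ * ⟨B, hBG⟩, hfin _ ?_ ?_⟩
        · rw [hu]; show w * bar 1 = w; rw [hbar1, mul_one]
        · rw [hv]; show w * bar w = (1:K); rw [hbarw]; exact hw3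
      · exact absurd (hu.trans hv.symm) huv
      · refine ⟨⟨Mw, hMwG⟩, hfin _ ?_ ?_⟩
        · rw [hu]; show w * 1 = w; rw [mul_one]
        · rw [hv]; rfl
      · refine ⟨⟨Mww, hMwwG⟩, hfin _ ?_ ?_⟩
        · rw [hu]; show (w*w) * 1 = w*w; rw [mul_one]
        · rw [hv]; show (w*w) * w = (1:K); linear_combination (w - 1) * hw
      · refine ⟨⟨Mww, hMwwG⟩ * ⟨B, hBG⟩, hfin _ ?_ ?_⟩
        · rw [hu]; show (w*w) * bar 1 = w*w; rw [hbar1, mul_one]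
        · rw [hv]; show (w*w) * bar w = w; rw [hbarw]
          linear_combination (w^2 - w) * hw
      · exact absurd (hu.trans hv.symm) huv
    exact ⟨MulEquiv.ofBijective M ⟨hMinj, hMsurj⟩, fun f x => rfl⟩
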